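/- arXiv:1704.00520 — 2 statements merged into one kernel-verified Lean document; each statement's English description precedes it below -/
import Mathlib

section
/- Let σ > 0, v > 0 and ε, m ∈ ℝ. Let μ be the bivariate Gaussian probability measure on ℝ² with mean vector (m, m) and covariance matrix [[σ² + v², v²], [v², σ² + v²]] (which is positive definite). Then ∫_ℝ Φ((ε − f)/σ)² · N(f | m, v²) df = μ({(z₁, z₂) ∈ ℝ² : z₁ ≤ ε and z₂ ≤ ε}). -/
open MeasureTheory Real

/-- Standard normal cumulative distribution function. -/
noncomputable def Phi (x : ℝ) : ℝ :=
  ∫ t in Set.Iic x, Real.exp (-t ^ 2 / 2) / Real.sqrt (2 * Real.pi)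

/-- Gaussian probability density with mean `m` and standard deviation `v`. -/
noncomputable def gaussPdf (m v x : ℝ) : ℝ :=
  Real.exp (-(x - m) ^ 2 / (2 * v ^ 2)) / Real.sqrt (2 * Real.pi * v ^ 2)

/-- Owen's t-function. -/
noncomputable def OwenT (h a : ℝ) : ℝ :=
  (1 / (2 * Real.pi)) * ∫ x in (0:ℝ)..a, Real.exp (-h ^ 2 * (1 + x ^ 2) / 2) / (1 + x ^ 2)

/-- Density of the bivariate Gaussian with mean `(m₁, m₂)` and covariance matrix
`[[A, B], [B, A]]` (assumed positive definite, i.e. `A > |B|`). -/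
noncomputable def biGaussDensity (m₁ m₂ A B : ℝ) (z : ℝ × ℝ) : ℝ :=
  Real.exp (-(A * (z.1 - m₁) ^ 2 - 2 * B * (z.1 - m₁) * (z.2 - m₂) + A * (z.2 - m₂) ^ 2) /
      (2 * (A ^ 2 - B ^ 2))) / (2 * Real.pi * Real.sqrt (A ^ 2 - B ^ 2))

lemma gaussPdf_nonneg (m v x : ℝ) : 0 ≤ gaussPdf m v x :=
  div_nonneg (Real.exp_pos _).le (Real.sqrt_nonneg _)

lemma gaussPdf_le (m : ℝ) {v : ℝ} (hv : 0 < v) (x : ℝ) :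
    gaussPdf m v x ≤ 1 / Real.sqrt (2 * Real.pi * v ^ 2) := by
  unfold gaussPdf
  have h1 : Real.exp (-(x - m) ^ 2 / (2 * v ^ 2)) ≤ 1 := by
    rw [Real.exp_le_one_iff]
    have : (0:ℝ) < 2 * v ^ 2 := by positivity
    apply div_nonpos_of_nonpos_of_nonneg _ this.le
    simp [sq_nonneg]
  have h2 : (0:ℝ) < Real.sqrt (2 * Real.pi * v ^ 2) := by
    apply Real.sqrt_pos.2; positivity
  gcongr

lemma continuous_gaussPdf (m v : ℝ) : Continuous (gaussPdf m v) := by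
  unfold gaussPdf; fun_prop

lemma integrable_gaussPdf (m : ℝ) {v : ℝ} (hv : 0 < v) : Integrable (gaussPdf m v) := by
  have h : gaussPdf m v = fun x => Real.exp (-(1 / (2 * v ^ 2)) * (x - m) ^ 2) /
      Real.sqrt (2 * Real.pi * v ^ 2) := by
    funext x; unfold gaussPdf; ring_nf
  rw [h]
  have hb : (0:ℝ) < 1 / (2 * v ^ 2) := by positivity
  exact ((integrable_exp_neg_mul_sq hb).comp_sub_right m).div_const _

lemma stdPdf_integrable : Integrable (fun t : ℝ => Real.exp (-t ^ 2 / 2) / Real.sqrt (2 * Real.pi)) := by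
  have h : (fun t : ℝ => Real.exp (-t ^ 2 / 2) / Real.sqrt (2 * Real.pi))
      = fun t => Real.exp (-(1/2 : ℝ) * t ^ 2) / Real.sqrt (2 * Real.pi) := by
    funext t; ring_nf
  rw [h]
  exact (integrable_exp_neg_mul_sq (by norm_num)).div_const _

lemma stdPdf_nonneg (t : ℝ) : (0:ℝ) ≤ Real.exp (-t ^ 2 / 2) / Real.sqrt (2 * Real.pi) :=
  div_nonneg (Real.exp_pos _).le (Real.sqrt_nonneg _)

lemma Phi_nonneg (x : ℝ) : 0 ≤ Phi x :=
  setIntegral_nonneg measurableSet_Iic fun t _ => stdPdf_nonneg t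

lemma Phi_le_one (x : ℝ) : Phi x ≤ 1 := by
  have h := setIntegral_le_integral (s := Set.Iic x) stdPdf_integrable
    (Filter.Eventually.of_forall fun t => stdPdf_nonneg t)
  have htot : ∫ t : ℝ, Real.exp (-t ^ 2 / 2) / Real.sqrt (2 * Real.pi) = 1 := by
    have h2 : (fun t : ℝ => Real.exp (-t ^ 2 / 2) / Real.sqrt (2 * Real.pi))
        = fun t => Real.exp (-(1/2 : ℝ) * t ^ 2) / Real.sqrt (2 * Real.pi) := by
      funext t; ring_nf
    rw [h2, integral_div, integral_gaussian]
    rw [show Real.pi / (1/2) = 2 * Real.pi by ring]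
    have : (0:ℝ) < Real.sqrt (2 * Real.pi) := Real.sqrt_pos.2 (by positivity)
    field_simp
  exact htot ▸ h

lemma Phi_mono : Monotone Phi := by
  intro x y hxy
  exact setIntegral_mono_set stdPdf_integrable.integrableOn
    (Filter.Eventually.of_forall fun t => stdPdf_nonneg t)
    (HasSubset.Subset.eventuallyLE (Set.Iic_subset_Iic.2 hxy))

lemma measurable_Phi : Measurable Phi := Phi_mono.measurable

lemma integral_gaussPdf_Iic {σ : ℝ} (hσ : 0 < σ) (f ε : ℝ) :
    ∫ z in Set.Iic ε, gaussPdf f σ z = Phi ((ε - f) / σ) := by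
  have himg : (fun t : ℝ => σ * t + f) '' Set.Iic ((ε - f) / σ) = Set.Iic ε := by
    ext z
    simp only [Set.mem_image, Set.mem_Iic]
    constructor
    · rintro ⟨t, ht, rfl⟩
      have := mul_le_mul_of_nonneg_left ht hσ.le
      rw [mul_div_cancel₀ _ hσ.ne'] at this
      linarith
    · intro hz
      exact ⟨(z - f) / σ, by gcongr, by field_simp; ring⟩
  have hderiv : ∀ t ∈ Set.Iic ((ε - f) / σ),
      HasDerivWithinAt (fun t : ℝ => σ * t + f) σ (Set.Iic ((ε - f) / σ)) t := by
    intro t _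
    simpa using ((hasDerivAt_id t).const_mul σ).add_const f |>.hasDerivWithinAt
  have hinj : Set.InjOn (fun t : ℝ => σ * t + f) (Set.Iic ((ε - f) / σ)) := by
    intro a _ b _ h
    simp only at h
    have := mul_left_cancel₀ hσ.ne' (by linarith : σ * a = σ * b)
    exact this
  have := integral_image_eq_integral_abs_deriv_smul measurableSet_Iic hderiv hinj (gaussPdf f σ)
  rw [himg] at this
  rw [this, Phi]
  apply setIntegral_congr_fun measurableSet_Iic
  intro t _
  simp only [smul_eq_mul, abs_of_pos hσ]
  unfold gaussPdf
  rw [show σ * t + f - f = σ * t by ring]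
  have hsq : Real.sqrt (2 * Real.pi * σ ^ 2) = Real.sqrt (2 * Real.pi) * σ := by
    rw [Real.sqrt_mul (by positivity), Real.sqrt_sq hσ.le]
  rw [hsq, show -(σ * t) ^ 2 / (2 * σ ^ 2) = -t ^ 2 / 2 by field_simp]
  field_simp


lemma key {σ v : ℝ} (hσ : 0 < σ) (hv : 0 < v) (m z₁ z₂ : ℝ) :
    ∫ y : ℝ, gaussPdf y σ z₁ * gaussPdf y σ z₂ * gaussPdf m v y
      = biGaussDensity m m (σ ^ 2 + v ^ 2) (v ^ 2) (z₁, z₂) := by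
  set A : ℝ := σ ^ 2 + v ^ 2 with hA
  set B : ℝ := v ^ 2 with hB
  have hD : A ^ 2 - B ^ 2 = σ ^ 2 * (σ ^ 2 + 2 * v ^ 2) := by rw [hA, hB]; ring
  have hDpos : (0:ℝ) < A ^ 2 - B ^ 2 := by rw [hD]; positivity
  set a : ℝ := (σ ^ 2 + 2 * v ^ 2) / (σ ^ 2 * v ^ 2) with ha
  have hapos : (0:ℝ) < a := by rw [ha]; positivity
  set c : ℝ := ((z₁ + z₂) * v ^ 2 + m * σ ^ 2) / (σ ^ 2 + 2 * v ^ 2) with hc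
  set Q : ℝ := (A * (z₁ - m) ^ 2 - 2 * B * (z₁ - m) * (z₂ - m) + A * (z₂ - m) ^ 2) /
      (2 * (A ^ 2 - B ^ 2)) with hQ
  have hpt : ∀ y : ℝ, gaussPdf y σ z₁ * gaussPdf y σ z₂ * gaussPdf m v y
      = (Real.exp (-Q) / (2 * Real.pi * σ ^ 2 * Real.sqrt (2 * Real.pi * v ^ 2)))
        * Real.exp (-(a / 2) * (y - c) ^ 2) := by
    intro y
    unfold gaussPdf
    rw [div_mul_div_comm, div_mul_div_comm, ← Real.exp_add, ← Real.exp_add,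
      div_mul_eq_mul_div, ← Real.exp_add, Real.mul_self_sqrt (by positivity : (0:ℝ) ≤ 2 * Real.pi * σ ^ 2)]
    congr 1
    rw [Real.exp_eq_exp]
    rw [hQ, ha, hc, hA, hB]
    have h1 : σ ^ 2 + 2 * v ^ 2 ≠ 0 := by positivity
    have h2 : (σ:ℝ) ≠ 0 := hσ.ne'
    have h3 : (v:ℝ) ≠ 0 := hv.ne'
    have h4 : (σ ^ 2 + v ^ 2) ^ 2 - v ^ 4 ≠ 0 := by
      rw [show (σ ^ 2 + v ^ 2) ^ 2 - v ^ 4 = σ ^ 2 * (σ ^ 2 + 2 * v ^ 2) by ring]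
      exact mul_ne_zero (pow_ne_zero 2 h2) h1
    field_simp
    ring
  rw [integral_congr_ae (Filter.Eventually.of_forall hpt) ]
  rw [MeasureTheory.integral_const_mul]
  have hshift : ∫ y : ℝ, Real.exp (-(a / 2) * (y - c) ^ 2)
      = ∫ y : ℝ, Real.exp (-(a / 2) * y ^ 2) :=
    integral_sub_right_eq_self (fun u => Real.exp (-(a / 2) * u ^ 2)) c
  rw [hshift, integral_gaussian]
  have hconst : Real.sqrt (Real.pi / (a / 2)) / (2 * Real.pi * σ ^ 2 * Real.sqrt (2 * Real.pi * v ^ 2))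
      = 1 / (2 * Real.pi * Real.sqrt (A ^ 2 - B ^ 2)) := by
    rw [div_eq_div_iff (by positivity) (by positivity)]
    have hs1 : Real.sqrt (Real.pi / (a / 2)) * Real.sqrt (A ^ 2 - B ^ 2)
        = Real.sqrt (Real.pi / (a / 2) * (A ^ 2 - B ^ 2)) :=
      (Real.sqrt_mul (by positivity) _).symm
    have hs2 : Real.sqrt (σ ^ 4 * (2 * Real.pi * v ^ 2))
        = (σ:ℝ) ^ 2 * Real.sqrt (2 * Real.pi * v ^ 2) := by
      rw [show (σ:ℝ) ^ 4 = (σ ^ 2) ^ 2 by ring, Real.sqrt_mul (sq_nonneg _),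
        Real.sqrt_sq (by positivity)]
    have hrad : Real.pi / (a / 2) * (A ^ 2 - B ^ 2) = σ ^ 4 * (2 * Real.pi * v ^ 2) := by
      rw [hD, ha]
      have h1 : σ ^ 2 + 2 * v ^ 2 ≠ 0 := by positivity
      field_simp
    calc Real.sqrt (Real.pi / (a / 2)) * (2 * Real.pi * Real.sqrt (A ^ 2 - B ^ 2))
        = 2 * Real.pi * Real.sqrt (Real.pi / (a / 2) * (A ^ 2 - B ^ 2)) := by rw [← hs1]; ring
      _ = 2 * Real.pi * (σ ^ 2 * Real.sqrt (2 * Real.pi * v ^ 2)) := by rw [hrad, hs2]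
      _ = 1 * (2 * Real.pi * σ ^ 2 * Real.sqrt (2 * Real.pi * v ^ 2)) := by ring
  calc Real.exp (-Q) / (2 * Real.pi * σ ^ 2 * Real.sqrt (2 * Real.pi * v ^ 2)) * Real.sqrt (Real.pi / (a / 2))
      = Real.exp (-Q) * (Real.sqrt (Real.pi / (a / 2)) / (2 * Real.pi * σ ^ 2 * Real.sqrt (2 * Real.pi * v ^ 2))) := by
        ring
    _ = Real.exp (-Q) * (1 / (2 * Real.pi * Real.sqrt (A ^ 2 - B ^ 2))) := by rw [hconst]
    _ = biGaussDensity m m A B (z₁, z₂) := by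
        rw [biGaussDensity, mul_one_div, hQ, neg_div]

lemma integrable_triple {σ v : ℝ} (hσ : 0 < σ) (hv : 0 < v) (m z₁ z₂ : ℝ) :
    Integrable (fun y : ℝ => gaussPdf y σ z₁ * gaussPdf y σ z₂ * gaussPdf m v y) := by
  apply Integrable.bdd_mul (c := (1 / Real.sqrt (2 * Real.pi * σ ^ 2)) ^ 2) (integrable_gaussPdf m hv)
  · apply Continuous.aestronglyMeasurable
    apply Continuous.mul <;> (unfold gaussPdf; fun_prop)
  · refine Filter.Eventually.of_forall fun y => ?_
    rw [Real.norm_eq_abs, abs_of_nonneg (mul_nonneg (gaussPdf_nonneg _ _ _) (gaussPdf_nonneg _ _ _)),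
      sq]
    have h1 := gaussPdf_le y hσ z₁
    have h2 := gaussPdf_le y hσ z₂
    exact mul_le_mul h1 h2 (gaussPdf_nonneg _ _ _) (by positivity)

theorem stmt_2 (σ v ε m : ℝ) (hσ : 0 < σ) (hv : 0 < v) :
    ∫ f : ℝ, Phi ((ε - f) / σ) ^ 2 * gaussPdf m v f
      = (((volume : Measure (ℝ × ℝ)).withDensity
            (fun z => ENNReal.ofReal (biGaussDensity m m (σ ^ 2 + v ^ 2) (v ^ 2) z)))
            {z : ℝ × ℝ | z.1 ≤ ε ∧ z.2 ≤ ε}).toReal := by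
  set M : Measure ℝ := volume.restrict (Set.Iic ε) with hM
  -- rewrite LHS as toReal of a lintegral
  have hnn : ∀ y : ℝ, (0:ℝ) ≤ Phi ((ε - y) / σ) ^ 2 * gaussPdf m v y := fun y =>
    mul_nonneg (sq_nonneg _) (gaussPdf_nonneg _ _ _)
  have hmeasLHS : AEStronglyMeasurable (fun y : ℝ => Phi ((ε - y) / σ) ^ 2 * gaussPdf m v y) volume := by
    apply Measurable.aestronglyMeasurable
    exact ((measurable_Phi.comp (by fun_prop : Measurable fun y : ℝ => (ε - y) / σ)).pow_const 2).mul
      (continuous_gaussPdf m v).measurable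
  rw [integral_eq_lintegral_of_nonneg_ae (Filter.Eventually.of_forall hnn) hmeasLHS]
  congr 1
  -- rewrite RHS as iterated lintegral
  have hSet : {z : ℝ × ℝ | z.1 ≤ ε ∧ z.2 ≤ ε} = Set.Iic ε ×ˢ Set.Iic ε := by
    ext z; simp [Set.mem_prod, Prod.le_def]
  have hmeasBi : Measurable fun z : ℝ × ℝ =>
      ENNReal.ofReal (biGaussDensity m m (σ ^ 2 + v ^ 2) (v ^ 2) z) := by
    apply Measurable.ennreal_ofReal
    unfold biGaussDensity; fun_prop
  rw [hSet, withDensity_apply _ (measurableSet_Iic.prod measurableSet_Iic)]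
  have hres : (volume : Measure (ℝ × ℝ)).restrict (Set.Iic ε ×ˢ Set.Iic ε)
      = M.prod M := by
    rw [hM, Measure.volume_eq_prod, Measure.prod_restrict]
  rw [hres, lintegral_prod _ hmeasBi.aemeasurable]
  -- replace bivariate density by a lintegral over the latent variable
  have hBi : ∀ z₁ z₂ : ℝ, ENNReal.ofReal (biGaussDensity m m (σ ^ 2 + v ^ 2) (v ^ 2) (z₁, z₂))
      = ∫⁻ y : ℝ, ENNReal.ofReal (gaussPdf y σ z₁ * gaussPdf y σ z₂ * gaussPdf m v y) := by
    intro z₁ z₂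
    rw [← key hσ hv m z₁ z₂]
    exact ofReal_integral_eq_lintegral_ofReal (integrable_triple hσ hv m z₁ z₂)
      (Filter.Eventually.of_forall fun y =>
        mul_nonneg (mul_nonneg (gaussPdf_nonneg _ _ _) (gaussPdf_nonneg _ _ _)) (gaussPdf_nonneg _ _ _))
  simp only [hBi]
  -- the Iic-lintegral of a gaussian slice is Phi
  have hPhiL : ∀ y : ℝ, ∫⁻ z : ℝ, ENNReal.ofReal (gaussPdf y σ z) ∂M
      = ENNReal.ofReal (Phi ((ε - y) / σ)) := by
    intro y
    rw [← integral_gaussPdf_Iic hσ y ε]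
    exact (ofReal_integral_eq_lintegral_ofReal (integrable_gaussPdf y hσ).integrableOn
      (Filter.Eventually.of_forall fun z => gaussPdf_nonneg _ _ _)).symm
  -- step A : for each z₁, swap the z₂ and y integrals and evaluate the z₂ integral
  have hstepA : ∀ z₁ : ℝ,
      (∫⁻ z₂ : ℝ, ∫⁻ y : ℝ, ENNReal.ofReal (gaussPdf y σ z₁ * gaussPdf y σ z₂ * gaussPdf m v y) ∂volume ∂M)
      = ∫⁻ y : ℝ, ENNReal.ofReal (gaussPdf y σ z₁ * gaussPdf m v y * Phi ((ε - y) / σ)) ∂volume := by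
    intro z₁
    rw [lintegral_lintegral_swap]
    · apply lintegral_congr
      intro y
      have hre : ∀ z₂ : ℝ, ENNReal.ofReal (gaussPdf y σ z₁ * gaussPdf y σ z₂ * gaussPdf m v y)
          = ENNReal.ofReal (gaussPdf y σ z₁ * gaussPdf m v y) * ENNReal.ofReal (gaussPdf y σ z₂) := by
        intro z₂
        rw [← ENNReal.ofReal_mul (mul_nonneg (gaussPdf_nonneg _ _ _) (gaussPdf_nonneg _ _ _))]
        congr 1; ring
      simp only [hre]
      rw [lintegral_const_mul' _ _ ENNReal.ofReal_ne_top, hPhiL y,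
        ← ENNReal.ofReal_mul (mul_nonneg (gaussPdf_nonneg _ _ _) (gaussPdf_nonneg _ _ _))]
    · apply Measurable.aemeasurable
      apply Measurable.ennreal_ofReal
      unfold gaussPdf; fun_prop
  simp only [hstepA]
  -- step B : swap the z₁ and y integrals and evaluate the z₁ integral
  rw [lintegral_lintegral_swap]
  · apply lintegral_congr
    intro y
    have hre : ∀ z₁ : ℝ, ENNReal.ofReal (gaussPdf y σ z₁ * gaussPdf m v y * Phi ((ε - y) / σ))
        = ENNReal.ofReal (gaussPdf m v y * Phi ((ε - y) / σ)) * ENNReal.ofReal (gaussPdf y σ z₁) := by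
      intro z₁
      rw [← ENNReal.ofReal_mul (mul_nonneg (gaussPdf_nonneg _ _ _) (Phi_nonneg _))]
      congr 1; ring
    simp only [hre]
    rw [lintegral_const_mul' _ _ ENNReal.ofReal_ne_top, hPhiL y,
      ← ENNReal.ofReal_mul (mul_nonneg (gaussPdf_nonneg _ _ _) (Phi_nonneg _))]
    congr 1; ring
  · apply Measurable.aemeasurable
    apply Measurable.ennreal_ofReal
    have h1 : Measurable fun q : ℝ × ℝ => gaussPdf q.2 σ q.1 := by unfold gaussPdf; fun_prop
    have h2 : Measurable fun q : ℝ × ℝ => gaussPdf m v q.2 := by unfold gaussPdf; fun_prop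
    have h3 : Measurable fun q : ℝ × ℝ => Phi ((ε - q.2) / σ) :=
      measurable_Phi.comp (by fun_prop)
    exact (h1.mul h2).mul h3
end

section
/- Let σ > 0, w ≥ 0, τ > 0 and ε, m₀ ∈ ℝ. Then ∫_ℝ T((ε − m)/√(σ² + w²), σ/√(σ² + 2w²)) · N(m | m₀, τ²) dm = T((ε − m₀)/√(σ² + w² + τ²), σ/√(σ² + 2w² + 2τ²)). -/
open MeasureTheory Real

lemma gaussA (c : ℝ) (d : ℝ) : ∫ m : ℝ, Real.exp (-c * (m - d) ^ 2) = Real.sqrt (π / c) := by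
  rw [← integral_gaussian c]
  exact integral_sub_right_eq_self (fun m => Real.exp (-c * m ^ 2)) d

lemma gaussB (α β a b : ℝ) (hα : 0 < α) (hβ : 0 < β) :
    ∫ m : ℝ, Real.exp (-α * (m - a) ^ 2 - β * (m - b) ^ 2)
      = Real.sqrt (π / (α + β)) * Real.exp (-(α * β / (α + β)) * (a - b) ^ 2) := by
  have hab : 0 < α + β := by linarith
  have key : ∀ m : ℝ, -α * (m - a) ^ 2 - β * (m - b) ^ 2
      = -(α + β) * (m - (α * a + β * b) / (α + β)) ^ 2 + (-(α * β / (α + β)) * (a - b) ^ 2) := by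
    intro m; field_simp; ring
  simp_rw [key, Real.exp_add, integral_mul_const, gaussA]

lemma gaussPdf_integrable (m₀ τ : ℝ) (hτ : 0 < τ) : Integrable (gaussPdf m₀ τ) := by
  unfold gaussPdf
  have hβ : (0:ℝ) < 1/(2*τ^2) := by positivity
  have h1 : Integrable (fun m : ℝ => Real.exp (-(1/(2*τ^2)) * (m - m₀)^2)) :=
    (integrable_exp_neg_mul_sq hβ).comp_sub_right m₀
  have : ∀ m : ℝ, Real.exp (-(m - m₀)^2 / (2*τ^2)) = Real.exp (-(1/(2*τ^2)) * (m - m₀)^2) := by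
    intro m; congr 1; field_simp
  simp_rw [this]
  exact h1.div_const _

lemma gaussPdf_nonneg_s5 (m₀ τ x : ℝ) : 0 ≤ gaussPdf m₀ τ x := by
  unfold gaussPdf; positivity

lemma inner_gauss (S τ ε m₀ : ℝ) (hS : 0 < S) (hτ : 0 < τ) (x : ℝ) :
    ∫ m : ℝ, Real.exp (-(ε - m)^2 * (1 + x^2) / (2*S)) / (1 + x^2) * gaussPdf m₀ τ m
      = Real.sqrt S / Real.sqrt (S + τ^2 * (1 + x^2))
          * Real.exp (-(ε - m₀)^2 * (1 + x^2) / (2 * (S + τ^2 * (1 + x^2)))) / (1 + x^2) := by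
  have h1x : (0:ℝ) < 1 + x^2 := by nlinarith [sq_nonneg x]
  have hu : (0:ℝ) < S + τ^2 * (1 + x^2) := by nlinarith [sq_nonneg τ]
  set c : ℝ := (1 + x^2) / (2*S) with hc
  set β : ℝ := 1 / (2*τ^2) with hβ
  have hcpos : 0 < c := by positivity
  have hβpos : 0 < β := by positivity
  have key : ∀ m : ℝ, Real.exp (-(ε - m)^2 * (1 + x^2) / (2*S)) / (1 + x^2) * gaussPdf m₀ τ m
      = Real.exp (-c * (m - ε)^2 - β * (m - m₀)^2) / ((1 + x^2) * Real.sqrt (2 * Real.pi * τ^2)) := by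
    intro m
    unfold gaussPdf
    rw [div_mul_div_comm, ← Real.exp_add]
    congr 2
    rw [hc, hβ]; field_simp; ring
  simp_rw [key]
  rw [MeasureTheory.integral_div, gaussB c β ε m₀ hcpos hβpos]
  have hsum : c + β = (S + τ^2 * (1 + x^2)) / (2 * S * τ^2) := by
    rw [hc, hβ]; field_simp; ring
  have hexp : -(c * β / (c + β)) * (ε - m₀)^2
      = -(ε - m₀)^2 * (1 + x^2) / (2 * (S + τ^2 * (1 + x^2))) := by
    rw [hc, hβ]; field_simp; ring
  rw [hexp]
  have hsqrt : Real.sqrt (π / (c + β)) = Real.sqrt (2 * π * τ^2) * (Real.sqrt S / Real.sqrt (S + τ^2 * (1 + x^2))) := by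
    rw [← Real.sqrt_div (by positivity) _, ← Real.sqrt_mul (by positivity)]
    congr 1
    rw [hsum]
    field_simp
  rw [hsqrt]
  have h2πτ : (0:ℝ) < Real.sqrt (2 * π * τ^2) := Real.sqrt_pos.2 (by positivity)
  field_simp

lemma phi_deriv (S τ : ℝ) (hS : 0 < S) (hτ : 0 < τ) (x : ℝ) :
    HasDerivAt (fun x => Real.sqrt S * x / Real.sqrt (S + τ^2 * (1 + x^2)))
      (Real.sqrt S * (S + τ^2) / ((S + τ^2*(1+x^2)) * Real.sqrt (S + τ^2*(1+x^2)))) x := by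
  have hu : 0 < S + τ^2 * (1 + x^2) := by nlinarith [sq_nonneg x, sq_nonneg τ]
  have hu' : HasDerivAt (fun x : ℝ => S + τ^2 * (1 + x^2)) (τ^2 * (2*x)) x := by
    have : HasDerivAt (fun x : ℝ => x^2) (2*x) x := by
      simpa using (hasDerivAt_pow 2 x)
    simpa using ((this.const_add 1).const_mul (τ^2)).const_add S
  have hs : HasDerivAt (fun x : ℝ => Real.sqrt (S + τ^2 * (1 + x^2)))
      (τ^2 * (2*x) / (2 * Real.sqrt (S + τ^2 * (1 + x^2)))) x := hu'.sqrt hu.ne'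
  have hnum : HasDerivAt (fun x : ℝ => Real.sqrt S * x) (Real.sqrt S) x := by
    simpa using (hasDerivAt_id x).const_mul (Real.sqrt S)
  have hsx : Real.sqrt (S + τ^2 * (1 + x^2)) ≠ 0 := (Real.sqrt_pos.2 hu).ne'
  have := hnum.div hs hsx
  refine this.congr_deriv (Eq.symm ?_)
  have h1 : Real.sqrt (S + τ^2 * (1 + x^2)) ^ 2 = S + τ^2 * (1 + x^2) := Real.sq_sqrt hu.le
  rw [h1]
  field_simp
  linear_combination (-1:ℝ) * h1

lemma subst_lemma (S τ D a : ℝ) (hS : 0 < S) (hτ : 0 < τ) :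
    ∫ x in (0:ℝ)..a,
        Real.sqrt S / Real.sqrt (S + τ^2 * (1 + x^2))
          * Real.exp (-D^2 * (1 + x^2) / (2 * (S + τ^2 * (1 + x^2)))) / (1 + x^2)
      = ∫ y in (0:ℝ)..(Real.sqrt S * a / Real.sqrt (S + τ^2 * (1 + a^2))),
          Real.exp (-(D^2/(S+τ^2)) * (1 + y^2) / 2) / (1 + y^2) := by
  have hu : ∀ x : ℝ, 0 < S + τ^2 * (1 + x^2) := by
    intro x; nlinarith [sq_nonneg x, sq_nonneg τ]
  have hg : Continuous (fun y : ℝ => Real.exp (-(D^2/(S+τ^2)) * (1 + y^2) / 2) / (1 + y^2)) := by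
    apply Continuous.div (by continuity) (by continuity)
    intro y; nlinarith [sq_nonneg y]
  have hcont : ContinuousOn (fun x : ℝ =>
      Real.sqrt S * (S + τ^2) / ((S + τ^2*(1+x^2)) * Real.sqrt (S + τ^2*(1+x^2)))) (Set.uIcc 0 a) := by
    apply ContinuousOn.div continuousOn_const
    · exact (Continuous.mul (by continuity) (by fun_prop)).continuousOn
    · intro x _
      have := hu x
      positivity
  have key := intervalIntegral.integral_comp_smul_deriv
    (fun x _ => phi_deriv S τ hS hτ x) hcont hg
  have h0 : Real.sqrt S * 0 / Real.sqrt (S + τ^2*(1+(0:ℝ)^2)) = 0 := by simp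
  rw [h0] at key
  rw [← key]
  apply intervalIntegral.integral_congr
  intro x _
  have hux := hu x
  have hφsq : (Real.sqrt S * x / Real.sqrt (S + τ^2 * (1 + x^2)))^2
      = S * x^2 / (S + τ^2 * (1 + x^2)) := by
    rw [div_pow, mul_pow, Real.sq_sqrt hS.le, Real.sq_sqrt hux.le]
  simp only [Function.comp, smul_eq_mul]
  rw [hφsq]
  have h1x : (0:ℝ) < 1 + x^2 := by nlinarith [sq_nonneg x]
  have hsu : (0:ℝ) < Real.sqrt (S + τ^2 * (1 + x^2)) := Real.sqrt_pos.2 hux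
  have hargs : -(D^2/(S+τ^2)) * (1 + S * x^2 / (S + τ^2 * (1 + x^2))) / 2
      = -D^2 * (1 + x^2) / (2 * (S + τ^2 * (1 + x^2))) := by
    have hSτ : (0:ℝ) < S + τ^2 := by positivity
    field_simp
    ring
  rw [hargs]
  have hss : Real.sqrt (S + τ^2 * (1 + x^2)) * Real.sqrt (S + τ^2 * (1 + x^2))
      = S + τ^2 * (1 + x^2) := Real.mul_self_sqrt hux.le
  field_simp
  ring_nf

lemma main_aux (S τ ε m₀ a : ℝ) (hS : 0 < S) (hτ : 0 < τ) (ha : 0 ≤ a) :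
    ∫ m : ℝ, (∫ x in (0:ℝ)..a,
        Real.exp (-(ε - m)^2 * (1 + x^2) / (2*S)) / (1 + x^2)) * gaussPdf m₀ τ m
      = ∫ y in (0:ℝ)..(Real.sqrt S * a / Real.sqrt (S + τ^2 * (1 + a^2))),
          Real.exp (-((ε - m₀)^2/(S+τ^2)) * (1 + y^2) / 2) / (1 + y^2) := by
  have h1x : ∀ x : ℝ, (0:ℝ) < 1 + x^2 := fun x => by nlinarith [sq_nonneg x]
  have step1 : ∀ m : ℝ, (∫ x in (0:ℝ)..a,
        Real.exp (-(ε - m)^2 * (1 + x^2) / (2*S)) / (1 + x^2)) * gaussPdf m₀ τ m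
      = ∫ x in Set.Ioc (0:ℝ) a,
          Real.exp (-(ε - m)^2 * (1 + x^2) / (2*S)) / (1 + x^2) * gaussPdf m₀ τ m := by
    intro m
    rw [intervalIntegral.integral_of_le ha, ← MeasureTheory.integral_mul_const]
  simp_rw [step1]
  have hint : Integrable (Function.uncurry fun (m x : ℝ) =>
      Real.exp (-(ε - m)^2 * (1 + x^2) / (2*S)) / (1 + x^2) * gaussPdf m₀ τ m)
      ((volume : Measure ℝ).prod (volume.restrict (Set.Ioc 0 a))) := by
    have hg : Integrable (fun p : ℝ × ℝ => gaussPdf m₀ τ p.1 * 1)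
        ((volume : Measure ℝ).prod (volume.restrict (Set.Ioc 0 a))) :=
      (gaussPdf_integrable m₀ τ hτ).mul_prod (integrable_const 1)
    apply hg.mono
    · apply Continuous.aestronglyMeasurable
      have c1 : Continuous fun p : ℝ × ℝ => Real.exp (-(ε - p.1)^2 * (1 + p.2^2) / (2*S)) := by
        fun_prop
      have c2 : Continuous fun p : ℝ × ℝ => (1 + p.2^2 : ℝ) := by continuity
      have c3 : Continuous fun p : ℝ × ℝ => gaussPdf m₀ τ p.1 := by
        unfold gaussPdf; fun_prop
      exact ((c1.div c2 (fun p => (h1x p.2).ne')).mul c3)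
    · filter_upwards with p
      simp only [Function.uncurry, norm_mul, Real.norm_eq_abs, mul_one]
      have hpdf := gaussPdf_nonneg_s5 m₀ τ p.1
      rw [abs_of_nonneg hpdf]
      have he : |Real.exp (-(ε - p.1)^2 * (1 + p.2^2) / (2*S)) / (1 + p.2^2)| ≤ 1 := by
        rw [abs_of_nonneg (by positivity)]
        rw [div_le_one (h1x p.2)]
        calc Real.exp (-(ε - p.1)^2 * (1 + p.2^2) / (2*S)) ≤ 1 := by
              rw [Real.exp_le_one_iff, neg_mul, neg_div]
              exact neg_nonpos_of_nonneg (by positivity)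
          _ ≤ 1 + p.2^2 := by nlinarith [sq_nonneg p.2]
      calc |Real.exp (-(ε - p.1)^2 * (1 + p.2^2) / (2*S)) / (1 + p.2^2)| * gaussPdf m₀ τ p.1
          ≤ 1 * gaussPdf m₀ τ p.1 := by gcongr
        _ = gaussPdf m₀ τ p.1 := one_mul _
  rw [MeasureTheory.integral_integral_swap hint]
  have step2 : ∀ x : ℝ, ∫ m : ℝ,
      Real.exp (-(ε - m)^2 * (1 + x^2) / (2*S)) / (1 + x^2) * gaussPdf m₀ τ m
      = Real.sqrt S / Real.sqrt (S + τ^2 * (1 + x^2))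
          * Real.exp (-(ε - m₀)^2 * (1 + x^2) / (2 * (S + τ^2 * (1 + x^2)))) / (1 + x^2) :=
    inner_gauss S τ ε m₀ hS hτ
  simp_rw [step2]
  rw [← intervalIntegral.integral_of_le ha]
  exact subst_lemma S τ (ε - m₀) a hS hτ

theorem stmt_5 (σ w τ ε m₀ : ℝ) (hσ : 0 < σ) (hw : 0 ≤ w) (hτ : 0 < τ) :
    ∫ m : ℝ,
        OwenT ((ε - m) / Real.sqrt (σ ^ 2 + w ^ 2)) (σ / Real.sqrt (σ ^ 2 + 2 * w ^ 2))
          * gaussPdf m₀ τ m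
      = OwenT ((ε - m₀) / Real.sqrt (σ ^ 2 + w ^ 2 + τ ^ 2))
          (σ / Real.sqrt (σ ^ 2 + 2 * w ^ 2 + 2 * τ ^ 2)) := by
  have hS : (0:ℝ) < σ^2 + w^2 := by positivity
  have hB : (0:ℝ) < σ^2 + 2*w^2 := by positivity
  have hST : (0:ℝ) < σ^2 + w^2 + τ^2 := by positivity
  have ha : (0:ℝ) ≤ σ / Real.sqrt (σ^2 + 2*w^2) := by positivity
  have hpt : ∀ m : ℝ, OwenT ((ε - m) / Real.sqrt (σ^2 + w^2)) (σ / Real.sqrt (σ^2 + 2*w^2))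
        * gaussPdf m₀ τ m
      = (1/(2*π)) * ((∫ x in (0:ℝ)..(σ / Real.sqrt (σ^2 + 2*w^2)),
          Real.exp (-(ε - m)^2 * (1 + x^2) / (2*(σ^2 + w^2))) / (1 + x^2)) * gaussPdf m₀ τ m) := by
    intro m
    unfold OwenT
    rw [mul_assoc]
    congr 2
    apply intervalIntegral.integral_congr
    intro x _
    have harg : -((ε - m) / Real.sqrt (σ^2 + w^2))^2 * (1 + x^2) / 2
        = -(ε - m)^2 * (1 + x^2) / (2*(σ^2 + w^2)) := by
      rw [div_pow, Real.sq_sqrt hS.le]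
      rw [neg_mul, neg_div, neg_mul, neg_div, neg_inj, div_mul_eq_mul_div, div_div]
      ring
    simp only [harg]
  simp_rw [hpt]
  rw [MeasureTheory.integral_const_mul,
    main_aux (σ^2 + w^2) τ ε m₀ (σ / Real.sqrt (σ^2 + 2*w^2)) hS hτ ha]
  unfold OwenT
  have ha2 : (σ / Real.sqrt (σ^2 + 2*w^2))^2 = σ^2 / (σ^2 + 2*w^2) := by
    rw [div_pow, Real.sq_sqrt hB.le]
  have hend : Real.sqrt (σ^2 + w^2) * (σ / Real.sqrt (σ^2 + 2*w^2)) /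
      Real.sqrt ((σ^2 + w^2) + τ^2 * (1 + (σ / Real.sqrt (σ^2 + 2*w^2))^2))
      = σ / Real.sqrt (σ^2 + 2*w^2 + 2*τ^2) := by
    rw [ha2]
    have h1 : (σ^2 + w^2) + τ^2 * (1 + σ^2/(σ^2 + 2*w^2))
        = (σ^2 + w^2) * ((σ^2 + 2*w^2 + 2*τ^2)/(σ^2 + 2*w^2)) := by
      field_simp; ring
    rw [h1, Real.sqrt_mul hS.le, Real.sqrt_div (by positivity : (0:ℝ) ≤ σ^2 + 2*w^2 + 2*τ^2)]
    have h2 : Real.sqrt (σ^2 + w^2) ≠ 0 := (Real.sqrt_pos.2 hS).ne'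
    have h3 : Real.sqrt (σ^2 + 2*w^2) ≠ 0 := (Real.sqrt_pos.2 hB).ne'
    have h4 : Real.sqrt (σ^2 + 2*w^2 + 2*τ^2) ≠ 0 := (Real.sqrt_pos.2 (by positivity)).ne'
    field_simp
  rw [hend]
  congr 1
  apply intervalIntegral.integral_congr
  intro y _
  have harg : ((ε - m₀) / Real.sqrt (σ^2 + w^2 + τ^2))^2 = (ε - m₀)^2 / (σ^2 + w^2 + τ^2) := by
    rw [div_pow, Real.sq_sqrt hST.le]
  simp only [harg]
end
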